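/- For a partition λ with Frobenius rows (a_1,...,a_s; b_1,...,b_s), suppose i ≤ s < j and the box (i,j) lies in the Young diagram of λ (i.e., j ≤ λ_i). If ℓ = λ'_j, then the hook length satisfies a_i − a_ℓ < h_{i,j}(λ) < a_i − a_{ℓ+1}, with the convention a_{s+1} = −1. -/

import Mathlib

open Filter

/-- A partition represented as a weakly decreasing, eventually zero sequence of parts
(0-indexed: `f i` is the (i+1)-st part). -/
def IsPartition (f : ℕ → ℕ) : Prop :=
  Antitone f ∧ ∀ᶠ i in atTop, f i = 0

/-- The size `|λ|` of a partition. -/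
noncomputable def psize (f : ℕ → ℕ) : ℕ := ∑' i, f i

/-- The conjugate partition: `conj f j` is the number of parts of `f` exceeding `j`,
i.e. the (j+1)-st column length. -/
noncomputable def conj (f : ℕ → ℕ) : ℕ → ℕ := fun j => Nat.card {i : ℕ // j < f i}

/-- The Durfee square size: the number of indices `i` with `λ_{i+1} ≥ i+1`. -/
noncomputable def durfee (f : ℕ → ℕ) : ℕ := Nat.card {i : ℕ // i < f i}

/-- Top Frobenius entry `a_{i+1} = λ_{i+1} - (i+1)` (0-indexed). -/
noncomputable def frobA (f : ℕ → ℕ) (i : ℕ) : ℕ := f i - (i + 1)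

/-- Bottom Frobenius entry `b_{i+1} = λ'_{i+1} - (i+1)` (0-indexed). -/
noncomputable def frobB (f : ℕ → ℕ) (i : ℕ) : ℕ := conj f i - (i + 1)

/-- Hook length of the (0-indexed) box `(i,j)` (valid when `j < f i`):
`h = (λ_i - j) + (λ'_j - i) - 1` in 1-indexed terms, which equals
`(λ_i - i) + (λ'_j - j) + 1`. -/
noncomputable def hook (f : ℕ → ℕ) (i j : ℕ) : ℕ :=
  (f i - (j + 1)) + (conj f j - (i + 1)) + 1

/-- A `t`-core partition: no hook length divisible by `t`. -/
def IsTCore (t : ℕ) (f : ℕ → ℕ) : Prop :=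
  IsPartition f ∧ ∀ i j, j < f i → ¬ t ∣ hook f i j

/-- The 1-indexed top Frobenius entry `a_k = λ_k - k` for `1 ≤ k ≤ s`,
with the convention `a_k = -1` for `k > s` (in particular `a_{s+1} = -1`). -/
noncomputable def frobAZ (f : ℕ → ℕ) (k : ℕ) : ℤ :=
  if 1 ≤ k ∧ k ≤ durfee f then (f (k - 1) : ℤ) - k else -1

lemma mem_iff_lt_card (S : Set ℕ) (hfin : S.Finite)
    (hdc : ∀ ⦃k⦄, k ∈ S → ∀ m < k, m ∈ S) (n : ℕ) : n ∈ S ↔ n < Nat.card S := by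
  rw [Nat.card_coe_set_eq]
  constructor
  · intro hn
    have hsub : Set.Iic n ⊆ S := by
      intro m hm
      rcases Nat.eq_or_lt_of_le (Set.mem_Iic.mp hm) with h | h
      · exact h ▸ hn
      · exact hdc hn m h
    have := Set.ncard_le_ncard hsub hfin
    rw [← Finset.coe_Iic, Set.ncard_coe_finset, Nat.card_Iic] at this
    omega
  · intro hn
    by_contra hmem
    have hsub : S ⊆ Set.Iio n := by
      intro k hk
      rw [Set.mem_Iio]
      by_contra hkn
      push_neg at hkn
      have : n ∈ S := by
        rcases Nat.eq_or_lt_of_le hkn with h | h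
        · exact h ▸ hk
        · exact hdc hk n h
      exact hmem this
    have := Set.ncard_le_ncard hsub (Set.finite_Iio n)
    rw [← Finset.coe_Iio, Set.ncard_coe_finset, Nat.card_Iio] at this
    omega

lemma conj_mem (f : ℕ → ℕ) (hf : IsPartition f) (j n : ℕ) :
    j < f n ↔ n < conj f j := by
  obtain ⟨N, hN⟩ := Filter.eventually_atTop.mp hf.2
  have hfin : {i : ℕ | j < f i}.Finite := by
    apply Set.Finite.subset (Set.finite_Iio N)
    intro k hk
    simp only [Set.mem_Iio, Set.mem_setOf_eq] at *
    by_contra h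
    push_neg at h
    have := hN k h
    omega
  have := mem_iff_lt_card {i : ℕ | j < f i} hfin
    (fun k hk m hm => lt_of_lt_of_le hk (hf.1 hm.le)) n
  exact this

lemma durfee_mem (f : ℕ → ℕ) (hf : IsPartition f) (n : ℕ) :
    n < f n ↔ n < durfee f := by
  obtain ⟨N, hN⟩ := Filter.eventually_atTop.mp hf.2
  have hfin : {i : ℕ | i < f i}.Finite := by
    apply Set.Finite.subset (Set.finite_Iio N)
    intro k hk
    simp only [Set.mem_Iio, Set.mem_setOf_eq] at *
    by_contra h
    push_neg at h
    have := hN k h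
    omega
  have hdc : ∀ ⦃k⦄, k ∈ {i : ℕ | i < f i} → ∀ m < k, m ∈ {i : ℕ | i < f i} := by
    intro k hk m hm
    simp only [Set.mem_setOf_eq] at *
    have := hf.1 hm.le
    omega
  have := mem_iff_lt_card {i : ℕ | i < f i} hfin hdc n
  exact this

/-- For a box `(i,j)` (1-indexed) with `i ≤ s < j ≤ λ_i` and `ℓ = λ'_j`,
the hook length satisfies `a_i - a_ℓ < h_{i,j} < a_i - a_{ℓ+1}` (with `a_{s+1} = -1`). -/
theorem stmt4 (f : ℕ → ℕ) (hf : IsPartition f) (i j : ℕ)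
    (h1 : 1 ≤ i) (h2 : i ≤ durfee f) (h3 : durfee f < j) (h4 : j ≤ f (i - 1)) :
    frobAZ f i - frobAZ f (conj f (j - 1)) < (hook f (i - 1) (j - 1) : ℤ) ∧
    (hook f (i - 1) (j - 1) : ℤ) < frobAZ f i - frobAZ f (conj f (j - 1) + 1) := by
  set s := durfee f with hs
  set ℓ := conj f (j - 1) with hℓ
  have hiℓ : i ≤ ℓ := by
    have h5 : j - 1 < f (i - 1) := by omega
    have := (conj_mem f hf (j - 1) (i - 1)).mp h5
    omega
  have hℓs : ℓ ≤ s := by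
    by_contra h
    push_neg at h
    have h5 : j - 1 < f s := (conj_mem f hf (j - 1) s).mpr h
    have h6 : s < f s := by omega
    have := (durfee_mem f hf s).mp h6
    omega
  have hfl : j ≤ f (ℓ - 1) := by
    have := (conj_mem f hf (j - 1) (ℓ - 1)).mpr (by omega : ℓ - 1 < ℓ)
    omega
  have hfl2 : f ℓ < j := by
    by_contra h
    push_neg at h
    have := (conj_mem f hf (j - 1) ℓ).mp (by omega)
    omega
  have hAi : frobAZ f i = (f (i - 1) : ℤ) - i := by rw [frobAZ, if_pos ⟨h1, h2⟩]
  have hAℓ : frobAZ f ℓ = (f (ℓ - 1) : ℤ) - ℓ := by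
    rw [frobAZ, if_pos ⟨by omega, hℓs⟩]
  have hhook : (hook f (i - 1) (j - 1) : ℤ) = ((f (i - 1) : ℤ) - j) + ((ℓ : ℤ) - i) + 1 := by
    rw [hook]
    have e1 : j - 1 + 1 = j := by omega
    have e2 : i - 1 + 1 = i := by omega
    rw [e1, e2, ← hℓ]
    push_cast [Nat.cast_sub h4, Nat.cast_sub hiℓ]
    ring
  constructor
  · rw [hAi, hAℓ, hhook]
    omega
  · by_cases hcase : ℓ + 1 ≤ s
    · have hA1 : frobAZ f (ℓ + 1) = (f ℓ : ℤ) - (ℓ + 1) := by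
        rw [frobAZ, if_pos ⟨by omega, hcase⟩]
        simp
      rw [hAi, hA1, hhook]
      omega
    · have hA1 : frobAZ f (ℓ + 1) = -1 := by
        rw [frobAZ, if_neg (by omega)]
      rw [hAi, hA1, hhook]
      omega
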